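/- With the notation of the coefficient identity a_p = Σ_{j=c}^{⌊p/2⌋} Im(ρ̄_{n−j} ρ_{n−p+j})(x_j y_{p−j} − x_{p−j} y_j): suppose x_i = y_i = 0 for i < c, x_c > 0, y_c > 0, and suppose c ≤ c′ ≤ n is such that x_j / x_c = y_j / y_c for all c ≤ j ≤ c′. Then a_p = 0 for all p ≤ c + c′. Moreover, if c′ < n, then a_{c+c′+1} = Im(ρ̄_{n−c} ρ_{n−c′−1}) · x_c · y_c · ( y_{c′+1}/y_c − x_{c′+1}/x_c ). -/

import Mathlib

open Finset in
/-- Vanishing and first nonzero coefficient: with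
`aₚ = Σ_{j=0}^{⌊p/2⌋} Im(ρ̄_{n-j} ρ_{n-p+j})(xⱼ y_{p-j} - x_{p-j} yⱼ)`, if
`xᵢ = yᵢ = 0` for `i < c`, `x_c > 0`, `y_c > 0`, and `xⱼ/x_c = yⱼ/y_c` for
`c ≤ j ≤ c'`, then `aₚ = 0` for `p ≤ c + c'`, and if `c' < n` then
`a_{c+c'+1} = Im(ρ̄_{n-c} ρ_{n-c'-1}) x_c y_c (y_{c'+1}/y_c - x_{c'+1}/x_c)`. -/
theorem coeff_vanishing_and_leading (n c c' : ℕ) (ρ : ℤ → ℂ) (x y : ℤ → ℝ)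
    (hcc' : c ≤ c') (hc'n : c' ≤ n)
    (hρ : ∀ k : ℤ, k < 0 ∨ (n : ℤ) < k → ρ k = 0)
    (hx0 : ∀ k : ℤ, k < (c : ℤ) → x k = 0) (hy0 : ∀ k : ℤ, k < (c : ℤ) → y k = 0)
    (hxc : 0 < x (c : ℤ)) (hyc : 0 < y (c : ℤ))
    (hprop : ∀ j : ℤ, (c : ℤ) ≤ j → j ≤ (c' : ℤ) → x j / x (c : ℤ) = y j / y (c : ℤ)) :
    (∀ p : ℕ, p ≤ c + c' →
      (∑ j ∈ range (p / 2 + 1),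
        ((starRingEnd ℂ) (ρ ((n : ℤ) - j)) * ρ ((n : ℤ) - p + j)).im *
          (x (j : ℤ) * y ((p : ℤ) - j) - x ((p : ℤ) - j) * y (j : ℤ))) = 0) ∧
    (c' < n →
      (∑ j ∈ range ((c + c' + 1) / 2 + 1),
        ((starRingEnd ℂ) (ρ ((n : ℤ) - j)) * ρ ((n : ℤ) - (c + c' + 1 : ℕ) + j)).im *
          (x (j : ℤ) * y ((c + c' + 1 : ℕ) - (j : ℤ)) -
            x ((c + c' + 1 : ℕ) - (j : ℤ)) * y (j : ℤ))) =
      ((starRingEnd ℂ) (ρ ((n : ℤ) - c)) * ρ ((n : ℤ) - c' - 1)).im * x (c : ℤ) * y (c : ℤ) *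
        (y ((c' : ℤ) + 1) / y (c : ℤ) - x ((c' : ℤ) + 1) / x (c : ℤ))) := by
  have hxc' := hxc.ne'
  have hyc' := hyc.ne'
  -- proportionality cross product
  have key : ∀ a b : ℤ, (c : ℤ) ≤ a → a ≤ (c' : ℤ) → (c : ℤ) ≤ b → b ≤ (c' : ℤ) →
      x a * y b - x b * y a = 0 := by
    intro a b ha1 ha2 hb1 hb2
    have h1 : x a * y (c : ℤ) = y a * x (c : ℤ) :=
      (div_eq_div_iff hxc'.symm.symm hyc'.symm.symm).mp (hprop a ha1 ha2) |>.trans (by ring)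
    have h2 : x b * y (c : ℤ) = y b * x (c : ℤ) :=
      (div_eq_div_iff hxc'.symm.symm hyc'.symm.symm).mp (hprop b hb1 hb2) |>.trans (by ring)
    have hne : x (c : ℤ) * y (c : ℤ) ≠ 0 := mul_ne_zero hxc' hyc'
    have h3 : x a * y b * (x (c : ℤ) * y (c : ℤ)) = x b * y a * (x (c : ℤ) * y (c : ℤ)) := by
      calc x a * y b * (x (c : ℤ) * y (c : ℤ)) = (x a * y (c : ℤ)) * (y b * x (c : ℤ)) := by ring
        _ = (y a * x (c : ℤ)) * (x b * y (c : ℤ)) := by rw [h1, ← h2]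
        _ = x b * y a * (x (c : ℤ) * y (c : ℤ)) := by ring
    have := mul_right_cancel₀ hne h3
    linarith
  -- generic term vanishing
  have term0 : ∀ p j : ℕ, j ≤ p / 2 → (j < c ∨ p - j ≤ c') →
      x (j : ℤ) * y ((p : ℤ) - j) - x ((p : ℤ) - j) * y (j : ℤ) = 0 := by
    intro p j hj hcase
    rcases lt_or_ge j c with hjc | hjc
    · rw [hx0 (j : ℤ) (by exact_mod_cast hjc), hy0 (j : ℤ) (by exact_mod_cast hjc)]
      ring
    · have h2j : 2 * j ≤ p := by omega
      have hpj : p - j ≤ c' := hcase.resolve_left (by omega)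
      have hpj' : ((p : ℤ) - j) = ((p - j : ℕ) : ℤ) := by push_cast; omega
      rw [hpj']
      exact key _ _ (by exact_mod_cast hjc) (by exact_mod_cast (by omega : j ≤ c'))
        (by exact_mod_cast (by omega : c ≤ p - j)) (by exact_mod_cast hpj)
  constructor
  · intro p hp
    refine Finset.sum_eq_zero fun j hj => ?_
    rw [term0 p j (by simpa using Nat.lt_succ_iff.mp (mem_range.mp hj))
      (by omega), mul_zero]
  · intro hc'n'
    set p := c + c' + 1 with hpdef
    have hcmem : c ∈ range (p / 2 + 1) := by
      rw [mem_range]; omega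
    rw [Finset.sum_eq_single_of_mem c hcmem (fun j hj hne => by
      rw [term0 p j (by simpa using Nat.lt_succ_iff.mp (mem_range.mp hj))
        (by rw [mem_range] at hj; omega), mul_zero])]
    have e1 : (n : ℤ) - p + c = (n : ℤ) - c' - 1 := by rw [hpdef]; push_cast; ring
    have e2 : (p : ℤ) - c = (c' : ℤ) + 1 := by rw [hpdef]; push_cast; ring
    rw [e1, e2]
    field_simp
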